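/- Let A be an integral domain whose quotient field has characteristic zero, and let f_1, …, f_n be elements of the polynomial ring A[X_1, …, X_n] whose Jacobian determinant det(∂f_i/∂X_j) is a unit in A. If K(A)[X_1, …, X_n] = K(A)[f_1, …, f_n], then A[X_1, …, X_n] = A[f_1, …, f_n]. -/

import Mathlib

open MvPolynomial Finsupp

namespace Stmt19Aux

lemma degree_add' {σ : Type*} (a b : σ →₀ ℕ) : (a + b).degree = a.degree + b.degree := by
  simp [Finsupp.degree_eq_weight_one, map_add]

lemma degree_le_one {σ : Type*} [DecidableEq σ] {β : σ →₀ ℕ} (h : β.degree ≤ 1) :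
    β = 0 ∨ ∃ k, β = Finsupp.single k 1 := by
  rcases eq_or_ne β 0 with h0 | h0
  · exact Or.inl h0
  right
  have hsupp : β.support.Nonempty := by
    rw [Finsupp.support_nonempty_iff]; exact h0
  obtain ⟨k, hk⟩ := hsupp
  have hk1 : β k = 1 :=
    le_antisymm ((Finsupp.le_degree k β).trans h)
      (Nat.one_le_iff_ne_zero.mpr (Finsupp.mem_support_iff.mp hk))
  refine ⟨k, ?_⟩
  ext l
  rcases eq_or_ne l k with rfl | hl
  · simp [hk1]
  · rw [Finsupp.single_apply, if_neg (Ne.symm hl)]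
    by_contra hβl
    have hlk : l ∈ β.support := Finsupp.mem_support_iff.mpr hβl
    have h2 : β k + β l ≤ β.degree := by
      rw [Finsupp.degree, ← Finset.sum_pair hl.symm]
      exact Finset.sum_le_sum_of_subset (by
        intro x hx
        simp only [Finset.mem_insert, Finset.mem_singleton] at hx
        rcases hx with rfl | rfl <;> assumption)
    omega

variable {S : Type*} [CommRing S] {n : ℕ}

/-- `Lo k g` : all coefficients of `g` in degree `< k` vanish. -/
def Lo (k : ℕ) (g : MvPolynomial (Fin n) S) : Prop :=
  ∀ β : Fin n →₀ ℕ, β.degree < k → coeff β g = 0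

lemma Lo_mono {k l : ℕ} {g : MvPolynomial (Fin n) S} (h : k ≤ l) (hg : Lo l g) : Lo k g :=
  fun β hβ => hg β (lt_of_lt_of_le hβ h)

lemma Lo_zero (k : ℕ) : Lo k (0 : MvPolynomial (Fin n) S) := fun _ _ => coeff_zero _

lemma Lo_add {k : ℕ} {g h : MvPolynomial (Fin n) S} (hg : Lo k g) (hh : Lo k h) :
    Lo k (g + h) := fun β hβ => by rw [coeff_add, hg β hβ, hh β hβ, add_zero]

lemma Lo_mul {k l : ℕ} {g h : MvPolynomial (Fin n) S} (hg : Lo k g) (hh : Lo l h) :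
    Lo (k + l) (g * h) := by
  intro β hβ
  rw [coeff_mul]
  apply Finset.sum_eq_zero
  rintro ⟨x, y⟩ hxy
  rw [Finset.HasAntidiagonal.mem_antidiagonal] at hxy
  have hd : x.degree + y.degree < k + l := by
    rw [← degree_add', hxy]; exact hβ
  rcases lt_or_ge x.degree k with hx | hx
  · rw [hg x hx, zero_mul]
  · rw [hh y (by omega), mul_zero]

lemma Lo_prod {ι : Type*} {s : Finset ι} {g : ι → MvPolynomial (Fin n) S} {k : ι → ℕ}
    (h : ∀ i ∈ s, Lo (k i) (g i)) : Lo (∑ i ∈ s, k i) (∏ i ∈ s, g i) := by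
  induction s using Finset.cons_induction with
  | empty => intro β hβ; simp at hβ
  | cons a s ha ih =>
      rw [Finset.sum_cons, Finset.prod_cons]
      exact Lo_mul (h a (Finset.mem_cons_self a s))
        (ih fun i hi => h i (Finset.mem_cons_of_mem hi))

lemma Lo_pow {g : MvPolynomial (Fin n) S} (hg : Lo 1 g) (m : ℕ) : Lo m (g ^ m) := by
  induction m with
  | zero => intro β hβ; omega
  | succ m ih =>
      have := Lo_mul hg ih
      rw [pow_succ']
      simpa [Nat.add_comm] using this

lemma Lo_finsuppProd {g : Fin n → MvPolynomial (Fin n) S} (hg : ∀ j, Lo 1 (g j))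
    (α : Fin n →₀ ℕ) : Lo α.degree (α.prod fun j e => g j ^ e) := by
  rw [Finsupp.prod, Finsupp.degree]
  exact Lo_prod fun j _ => Lo_pow (hg j) (α j)

lemma Lo_powDiff {g g' : MvPolynomial (Fin n) S} (h1 : Lo 1 g) (h1' : Lo 1 g')
    (h2 : Lo 2 (g - g')) (m : ℕ) : Lo (m + 1) (g ^ m - g' ^ m) := by
  induction m with
  | zero => simpa using Lo_zero 1
  | succ m ih =>
      have key : g ^ (m + 1) - g' ^ (m + 1) = g * (g ^ m - g' ^ m) + (g - g') * g' ^ m := by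
        ring
      rw [key]
      refine Lo_add ?_ ?_
      · have := Lo_mul h1 ih; simpa [Nat.add_comm, Nat.add_assoc, Nat.add_left_comm] using this
      · have := Lo_mul h2 (Lo_pow h1' m)
        have heq : (2:ℕ) + m = m + 1 + 1 := by omega
        rwa [heq] at this

lemma Lo_prodPowDiff {g g' : Fin n → MvPolynomial (Fin n) S}
    (h1 : ∀ j, Lo 1 (g j)) (h1' : ∀ j, Lo 1 (g' j)) (h2 : ∀ j, Lo 2 (g j - g' j))
    (α : Fin n →₀ ℕ) :
    Lo (α.degree + 1) ((α.prod fun j e => g j ^ e) - α.prod fun j e => g' j ^ e) := by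
  rw [Finsupp.prod, Finsupp.prod, Finsupp.degree_apply]
  induction α.support using Finset.cons_induction with
  | empty => simpa using Lo_zero 1
  | cons a s ha ih =>
      rw [Finset.prod_cons, Finset.prod_cons, Finset.sum_cons]
      have key : g a ^ α a * ∏ i ∈ s, g i ^ α i - g' a ^ α a * ∏ i ∈ s, g' i ^ α i
          = g a ^ α a * ((∏ i ∈ s, g i ^ α i) - ∏ i ∈ s, g' i ^ α i)
            + (g a ^ α a - g' a ^ α a) * ∏ i ∈ s, g' i ^ α i := by ring
      rw [key]
      refine Lo_add ?_ ?_
      · have := Lo_mul (Lo_pow (h1 a) (α a)) ih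
        simpa [Nat.add_assoc] using this
      · have := Lo_mul (Lo_powDiff (h1 a) (h1' a) (h2 a) (α a))
          (Lo_prod (s := s) (k := fun i => α i) fun i _ => Lo_pow (h1' i) (α i))
        have heq : α a + 1 + ∑ i ∈ s, α i = α a + ∑ i ∈ s, α i + 1 := by omega
        rwa [heq] at this

variable {A K : Type*} [CommRing A] [CommRing K] {n : ℕ}

lemma exists_preimage (φ : A →+* K) (p : MvPolynomial (Fin n) K)
    (h : ∀ m, coeff m p ∈ Set.range φ) : ∃ q, map φ q = p := by
  refine ⟨∑ m ∈ p.support, monomial m (h m).choose, ?_⟩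
  rw [map_sum]
  simp_rw [map_monomial]
  have : ∀ m, φ (h m).choose = coeff m p := fun m => (h m).choose_spec
  simp_rw [this]
  exact support_sum_monomial_coeff p

lemma coeff_aeval' (f : Fin n → MvPolynomial (Fin n) K) (p : MvPolynomial (Fin n) K)
    (β : Fin n →₀ ℕ) :
    coeff β (aeval f p) = ∑ α ∈ p.support, coeff α p * coeff β (α.prod fun j e => f j ^ e) := by
  conv_lhs => rw [← support_sum_monomial_coeff p]
  rw [map_sum, coeff_sum]
  apply Finset.sum_congr rfl
  intro α _
  rw [aeval_monomial, algebraMap_eq, coeff_C_mul]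

lemma aeval_map_comm (φ : A →+* K) (f : Fin n → MvPolynomial (Fin n) A)
    (q : MvPolynomial (Fin n) A) :
    aeval (fun i => map φ (f i)) (map φ q) = map φ (aeval f q) := by
  induction q using MvPolynomial.induction_on with
  | C a => simp [aeval_C, algebraMap_eq]
  | add p q hp hq => rw [map_add, map_add, hp, hq]; simp [map_add]
  | mul_X p i hp => rw [map_mul, map_X, map_mul, hp, aeval_X]; simp [map_mul]

lemma constantCoeff_pderiv (j : Fin n) (p : MvPolynomial (Fin n) A) :
    constantCoeff (pderiv j p) = coeff (Finsupp.single j 1) p := by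
  classical
  induction p using MvPolynomial.induction_on' with
  | add p q hp hq => simp [map_add, hp, hq, coeff_add]
  | monomial s a =>
      rw [pderiv_monomial, constantCoeff_monomial, coeff_monomial]
      by_cases hs : s = Finsupp.single j 1
      · subst hs; simp
      · rw [if_neg hs]
        by_cases hz : s - Finsupp.single j 1 = 0
        · rw [if_pos hz]
          have hle : s ≤ Finsupp.single j 1 := tsub_eq_zero_iff_le.mp hz
          have hsj : s j ≤ 1 := by simpa using hle j
          interval_cases h : s j
          · simp [h]
          · exfalso
            apply hs
            ext l
            rcases eq_or_ne l j with rfl | hl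
            · simpa using h
            · have := hle l
              simp only [Finsupp.single_apply, if_neg (Ne.symm hl)] at this ⊢
              omega
        · rw [if_neg hz]


lemma key (φ : A →+* K) (f : Fin n → MvPolynomial (Fin n) A)
    (hf0 : ∀ i, constantCoeff (f i) = 0)
    (M : Matrix (Fin n) (Fin n) A)
    (hM : ∀ i j, coeff (Finsupp.single j 1) (f i) = M i j)
    (hdet : IsUnit M.det)
    (P : MvPolynomial (Fin n) K)
    (hP : ∀ m, coeff m (aeval (fun i => map φ (f i)) P) ∈ Set.range φ) :
    ∀ α : Fin n →₀ ℕ, coeff α P ∈ Set.range φ := by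
  classical
  have hInv : Invertible M := M.invertibleOfIsUnitDet hdet
  set N : Matrix (Fin n) (Fin n) A := ⅟M with hN
  set fK : Fin n → MvPolynomial (Fin n) K := fun i => map φ (f i) with hfK
  set L : Fin n → MvPolynomial (Fin n) K := fun i => ∑ k, C (φ (M i k)) * X k with hL
  set L' : Fin n → MvPolynomial (Fin n) A := fun i => ∑ k, C (N i k) * X k with hL'
  have hLo1f : ∀ i, Lo 1 (fK i) := by
    intro i β hβ
    have hβ0 : β = 0 := by
      rwa [Nat.lt_one_iff, Finsupp.degree_eq_zero_iff] at hβ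
    subst hβ0
    show coeff 0 (map φ (f i)) = 0
    rw [coeff_map, ← constantCoeff_eq] at *
    rw [show (constantCoeff (f i) : A) = 0 from hf0 i, map_zero]
  have hLo1L : ∀ i, Lo 1 (L i) := by
    intro i β hβ
    have hβ0 : β = 0 := by
      rwa [Nat.lt_one_iff, Finsupp.degree_eq_zero_iff] at hβ
    subst hβ0
    simp [hL, coeff_sum, coeff_C_mul, coeff_X', Finsupp.single_eq_zero]
  have hLo2 : ∀ i, Lo 2 (fK i - L i) := by
    intro i β hβ
    rcases degree_le_one (Nat.lt_succ_iff.mp hβ) with h0 | ⟨k, rfl⟩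
    · subst h0
      rw [coeff_sub, hLo1f i 0 (by simp), hLo1L i 0 (by simp), sub_zero]
    · rw [coeff_sub]
      have h1 : coeff (Finsupp.single k 1) (fK i) = φ (M i k) := by
        rw [hfK]; rw [coeff_map, hM]
      have h2 : coeff (Finsupp.single k 1) (L i) = φ (M i k) := by
        rw [hL]
        rw [coeff_sum]
        simp only [coeff_C_mul, coeff_X']
        rw [Finset.sum_eq_single k]
        · simp
        · intro l _ hl
          rw [if_neg, mul_zero]
          intro heq
          exact hl (Finsupp.single_left_injective one_ne_zero heq)
        · simp
      rw [h1, h2, sub_self]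
  have hLL' : ∀ p : MvPolynomial (Fin n) K,
      aeval (fun i => map φ (L' i)) (aeval L p) = p := by
    have hcomp : (aeval (fun i => map φ (L' i))).comp (aeval L)
        = AlgHom.id K (MvPolynomial (Fin n) K) := by
      apply algHom_ext
      intro i
      simp only [AlgHom.comp_apply, aeval_X, AlgHom.id_apply]
      have hLK' : ∀ k, (map φ (L' k)) = ∑ l, C (φ (N k l)) * X l := by
        intro k
        rw [hL']
        simp [map_sum, map_mul, map_C, map_X]
      rw [hL]
      rw [map_sum]
      simp only [map_mul, aeval_C, aeval_X, algebraMap_eq]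
      simp_rw [hLK', Finset.mul_sum, ← mul_assoc, ← C_mul, ← map_mul φ]
      rw [Finset.sum_comm]
      have hcol : ∀ l, (∑ k, C (φ (M i k * N k l)) * X l : MvPolynomial (Fin n) K)
          = C (φ ((M * N) i l)) * X l := by
        intro l
        rw [← Finset.sum_mul, ← map_sum, ← map_sum, Matrix.mul_apply]
      simp_rw [hcol]
      rw [mul_invOf_self]
      simp [Matrix.one_apply, apply_ite C, apply_ite φ, ite_mul]
    intro p
    exact AlgHom.congr_fun hcomp p
  suffices H : ∀ d : ℕ, ∀ α : Fin n →₀ ℕ, α.degree = d → coeff α P ∈ Set.range φ by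
    intro α; exact H α.degree α rfl
  intro d
  induction d using Nat.strong_induction_on with
  | _ d IH =>
  intro α hα
  set Pd := homogeneousComponent d P with hPd
  obtain ⟨qlow, hqlow⟩ : ∃ q, map φ q = ∑ e ∈ Finset.range d, homogeneousComponent e P := by
    apply exists_preimage
    intro m
    rw [coeff_sum]
    simp_rw [coeff_homogeneousComponent]
    rw [Finset.sum_ite_eq (Finset.range d) m.degree (fun _ => coeff m P)]
    split_ifs with hmem
    · exact IH m.degree (Finset.mem_range.mp hmem) m rfl
    · exact ⟨0, map_zero φ⟩
  set R : MvPolynomial (Fin n) K := P - map φ qlow - Pd with hR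
  have hRcoeff : ∀ γ : Fin n →₀ ℕ, γ.degree ≤ d → coeff γ R = 0 := by
    intro γ hγ
    rw [hR, coeff_sub, coeff_sub, hqlow, coeff_sum]
    simp_rw [coeff_homogeneousComponent]
    rw [Finset.sum_ite_eq (Finset.range d) γ.degree (fun _ => coeff γ P), hPd,
      coeff_homogeneousComponent]
    rcases eq_or_lt_of_le hγ with heq | hlt
    · rw [if_neg (by simp [heq]), if_pos heq]
      ring
    · rw [if_pos (Finset.mem_range.mpr hlt), if_neg (by omega)]
      ring
  have hsupPd : ∀ γ ∈ Pd.support, γ.degree = d := by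
    intro γ hγ
    have h := homogeneousComponent_isHomogeneous d P (MvPolynomial.mem_support_iff.mp hγ)
    rwa [Finsupp.degree_eq_weight_one]
  have hQ : ∀ β : Fin n →₀ ℕ, coeff β (aeval L Pd) ∈ Set.range φ := by
    intro β
    by_cases hβ : β.degree = d
    · have e1 : coeff β (aeval fK R) = 0 := by
        rw [coeff_aeval']
        apply Finset.sum_eq_zero
        intro γ hγ
        rcases le_or_gt γ.degree d with hdeg | hdeg
        · rw [hRcoeff γ hdeg, zero_mul]
        · rw [Lo_finsuppProd hLo1f γ β (by omega), mul_zero]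
      have e2 : coeff β (aeval fK Pd) = coeff β (aeval L Pd) := by
        rw [← sub_eq_zero, coeff_aeval', coeff_aeval', ← Finset.sum_sub_distrib]
        apply Finset.sum_eq_zero
        intro γ hγ
        rw [← mul_sub, ← coeff_sub,
          Lo_prodPowDiff hLo1f hLo1L hLo2 γ β (by rw [hsupPd γ hγ]; omega), mul_zero]
      have e3 : coeff β (aeval fK (map φ qlow)) ∈ Set.range φ := by
        rw [hfK, aeval_map_comm φ f qlow, coeff_map]
        exact ⟨_, rfl⟩
      have hPsplit : aeval fK P = aeval fK (map φ qlow) + aeval fK Pd + aeval fK R := by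
        rw [← map_add, ← map_add]
        congr 1
        rw [hR]; ring
      have e4 : coeff β (aeval fK P) = coeff β (aeval fK (map φ qlow))
          + coeff β (aeval L Pd) := by
        rw [hPsplit, coeff_add, coeff_add, e1, e2, add_zero]
      obtain ⟨a, ha⟩ := hP β
      obtain ⟨b, hb⟩ := e3
      refine ⟨a - b, ?_⟩
      rw [map_sub, ha, hb]
      rw [show coeff β (aeval (fun i => map φ (f i)) P) = coeff β (aeval fK P) by rw [hfK]]
      rw [e4]; ring
    · have hL1 : ∀ i, (L i).IsHomogeneous 1 := by
        intro i
        rw [hL]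
        exact IsHomogeneous.sum _ _ _ fun k _ => isHomogeneous_C_mul_X _ _
      have hhom : (aeval L Pd).IsHomogeneous d := by
        have := (homogeneousComponent_isHomogeneous d P).aeval L hL1
        rwa [one_mul] at this
      refine ⟨0, ?_⟩
      rw [map_zero]
      refine (hhom.coeff_eq_zero ?_).symm
      exact hβ
  obtain ⟨q, hq⟩ := exists_preimage φ _ hQ
  have hPdq : Pd = map φ (aeval L' q) := by
    calc Pd = aeval (fun i => map φ (L' i)) (aeval L Pd) := (hLL' Pd).symm
    _ = aeval (fun i => map φ (L' i)) (map φ q) := by rw [hq]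
    _ = map φ (aeval L' q) := aeval_map_comm φ L' q
  have hfinal : coeff α P = φ (coeff α (aeval L' q)) := by
    have h1 : coeff α P = coeff α Pd := by
      rw [hPd, coeff_homogeneousComponent, if_pos hα]
    rw [h1, hPdq, coeff_map]
  rw [hfinal]
  exact ⟨_, rfl⟩

end Stmt19Aux

theorem stmt_19 (A : Type*) [CommRing A] [IsDomain A]
    [CharZero (FractionRing A)] (n : ℕ)
    (f : Fin n → MvPolynomial (Fin n) A)
    (hjac : ∃ u : Aˣ,
      (Matrix.of fun i j => MvPolynomial.pderiv j (f i)).det = MvPolynomial.C (u : A))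
    (h : Algebra.adjoin (FractionRing A)
      (Set.range fun i =>
        MvPolynomial.map (algebraMap A (FractionRing A)) (f i)) = ⊤) :
    Algebra.adjoin A (Set.range f) = ⊤ := by
  classical
  set K := FractionRing A
  set φ := algebraMap A K with hφ
  obtain ⟨u, hu⟩ := hjac
  set M : Matrix (Fin n) (Fin n) A :=
    Matrix.of fun i j => MvPolynomial.coeff (Finsupp.single j 1) (f i) with hMdef
  have hdet : M.det = (u : A) := by
    have h1 := congrArg (MvPolynomial.constantCoeff (σ := Fin n) (R := A)) hu
    rw [RingHom.map_det, MvPolynomial.constantCoeff_C] at h1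
    have h2 : (MvPolynomial.constantCoeff (σ := Fin n) (R := A)).mapMatrix
        (Matrix.of fun i j => MvPolynomial.pderiv j (f i)) = M := by
      ext i j
      exact Stmt19Aux.constantCoeff_pderiv j (f i)
    rwa [h2] at h1
  have hMunit : IsUnit M.det := hdet ▸ u.isUnit
  set c : Fin n → A := fun i => MvPolynomial.constantCoeff (f i) with hc
  set g : Fin n → MvPolynomial (Fin n) A := fun i => f i - MvPolynomial.C (c i) with hg
  have hg0 : ∀ i, MvPolynomial.constantCoeff (g i) = 0 := by
    intro i
    show MvPolynomial.constantCoeff (f i - MvPolynomial.C (c i)) = 0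
    simp [hc]
  have hgM : ∀ i j, MvPolynomial.coeff (Finsupp.single j 1) (g i) = M i j := by
    intro i j
    show MvPolynomial.coeff (Finsupp.single j 1) (f i - MvPolynomial.C (c i)) = M i j
    simp only [MvPolynomial.coeff_sub, MvPolynomial.coeff_C]
    rw [if_neg (fun hh => one_ne_zero (Finsupp.single_eq_zero.mp hh.symm))]
    simp [hMdef]
  rw [eq_top_iff, ← MvPolynomial.adjoin_range_X]
  apply Algebra.adjoin_le
  rintro _ ⟨i, rfl⟩
  have hXi : (MvPolynomial.X i : MvPolynomial (Fin n) K)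
      ∈ Algebra.adjoin K (Set.range fun i => MvPolynomial.map φ (f i)) := by
    rw [h]; trivial
  rw [Algebra.adjoin_range_eq_range_aeval] at hXi
  obtain ⟨P', hP'⟩ := hXi
  set P : MvPolynomial (Fin n) K :=
    MvPolynomial.aeval (fun j => MvPolynomial.X j + MvPolynomial.C (φ (c j))) P' with hPdef
  have hPX : MvPolynomial.aeval (fun i => MvPolynomial.map φ (g i)) P
      = MvPolynomial.X i := by
    have hfun : ∀ j, (MvPolynomial.aeval (fun i => MvPolynomial.map φ (g i)))
        (MvPolynomial.X j + MvPolynomial.C (φ (c j))) = MvPolynomial.map φ (f j) := by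
      intro j
      rw [map_add, MvPolynomial.aeval_X, MvPolynomial.aeval_C, MvPolynomial.algebraMap_eq]
      show MvPolynomial.map φ (f j - MvPolynomial.C (c j)) + _ = _
      rw [map_sub, MvPolynomial.map_C]
      ring
    rw [hPdef, MvPolynomial.comp_aeval_apply]
    simp only [hfun]
    exact hP'
  have hPcoeff : ∀ m, MvPolynomial.coeff m
      (MvPolynomial.aeval (fun i => MvPolynomial.map φ (g i)) P) ∈ Set.range φ := by
    intro m
    rw [hPX, MvPolynomial.coeff_X']
    split_ifs
    · exact ⟨1, map_one φ⟩
    · exact ⟨0, map_zero φ⟩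
  have hcoef := Stmt19Aux.key φ g hg0 M hgM hMunit P hPcoeff
  obtain ⟨q, hq⟩ := Stmt19Aux.exists_preimage φ P hcoef
  have hmapeq : MvPolynomial.map φ (MvPolynomial.aeval g q)
      = MvPolynomial.map φ (MvPolynomial.X i) := by
    rw [← Stmt19Aux.aeval_map_comm φ g q, hq, hPX, MvPolynomial.map_X]
  have hXq : MvPolynomial.aeval g q = MvPolynomial.X i :=
    MvPolynomial.map_injective φ (IsFractionRing.injective A K) hmapeq
  have hmem : (MvPolynomial.X i : MvPolynomial (Fin n) A)
      ∈ Algebra.adjoin A (Set.range g) := by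
    rw [Algebra.adjoin_range_eq_range_aeval]
    exact ⟨q, hXq⟩
  have hle : Algebra.adjoin A (Set.range g) ≤ Algebra.adjoin A (Set.range f) := by
    apply Algebra.adjoin_le
    rintro _ ⟨j, rfl⟩
    have : MvPolynomial.C (c j) = algebraMap A (MvPolynomial (Fin n) A) (c j) := rfl
    rw [hg]
    exact sub_mem (Algebra.subset_adjoin ⟨j, rfl⟩)
      (this ▸ Subalgebra.algebraMap_mem _ (c j))
  exact hle hmem
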